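/- Let q = (q_n)_{n≥1} be a sequence of Beurling primes with σ_c(ζ_q) < ∞ and Beurling integers (ν_n)_{n≥1}. Then for Lebesgue-almost every x ∈ ℝ the following holds: for every r > 2σ_c(ζ_q), there are only finitely many pairs (m, n) ∈ ℕ² (m, n ≥ 1) with |x − ν_m/ν_n| < ν_n^{−r}. In other words, the irrationality measure μ_q(x) of x relative to the system ℕ_q satisfies μ_q(x) ≤ 2σ_c(ζ_q) for almost every x ∈ ℝ. -/

import Mathlib

open Set Filter MeasureTheory

noncomputable section

/-- A sequence of Beurling primes: strictly increasing, first term `> 1`,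
tending to infinity, with logarithms linearly independent over `ℚ`. -/
def IsBeurlingPrimes (q : ℕ → ℝ) : Prop :=
  StrictMono q ∧ 1 < q 0 ∧ Tendsto q atTop atTop ∧
    LinearIndependent ℚ fun n => Real.log (q n)

/-- The set of Beurling integers: all finite products of the `q i` with
natural number exponents (including the empty product `1`). -/
def beurlingIntegers (q : ℕ → ℝ) : Set ℝ :=
  {x | ∃ e : ℕ →₀ ℕ, x = e.prod fun i k => q i ^ k}

/-- `ν` is the strictly increasing enumeration of `S`, tending to infinity. -/
def IsEnumeration (ν : ℕ → ℝ) (S : Set ℝ) : Prop :=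
  StrictMono ν ∧ Tendsto ν atTop atTop ∧ (∀ n, ν n ∈ S) ∧ ∀ x ∈ S, ∃ n, ν n = x

/-- Bohr's condition for the increasing enumeration `ν`:
`ν (n+1) - ν n ≥ c₁ * ν (n+1) ^ (-c₂)` for all `n`. -/
def BohrCondition (ν : ℕ → ℝ) : Prop :=
  ∃ c₁ > (0:ℝ), ∃ c₂ > (0:ℝ), ∀ n : ℕ, ν (n+1) - ν n ≥ c₁ * ν (n+1) ^ (-c₂)

/-- The Beurling prime counting function `π_q(x) = #{n : q_n ≤ x}`. -/
def piQ (q : ℕ → ℝ) (x : ℝ) : ℕ := Nat.card {n : ℕ | q n ≤ x}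

/-- The logarithmic integral `li x = ∫_1^x (1-1/u)/log u du`. -/
def li (x : ℝ) : ℝ := ∫ u in (1:ℝ)..x, (1 - u⁻¹) / Real.log u

/-- The abscissa of convergence `σ_c` of the Dirichlet series `∑ ν_n^{-s}`. -/
def sigmaC (ν : ℕ → ℝ) : ℝ := sInf {σ : ℝ | Summable fun n => ν n ^ (-σ)}

/-- Irrationality measure with respect to a Beurling system: for a.e. `x ∈ ℝ`,
`μ_q(x) ≤ 2 σ_c(ζ_q)`, i.e. for every `r > 2 σ_c(ζ_q)` only finitely many pairs
`(m, n)` satisfy `|x - ν_m/ν_n| < ν_n^{-r}`. -/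
theorem ae_irrationality_measure_le (q ν : ℕ → ℝ) (hq : IsBeurlingPrimes q)
    (hν : IsEnumeration ν (beurlingIntegers q))
    (hσc : ∃ σ : ℝ, Summable fun n => ν n ^ (-σ)) :
    ∀ᵐ x : ℝ ∂volume, ∀ r : ℝ, 2 * sigmaC ν < r →
      {p : ℕ × ℕ | |x - ν p.1 / ν p.2| < ν p.2 ^ (-r)}.Finite := by
  classical
  obtain ⟨hmono, hq0, htend, -⟩ := hq
  obtain ⟨hνmono, hνtend, hνmem, -⟩ := hν
  -- every Beurling integer is at least 1
  have hν1 : ∀ n, 1 ≤ ν n := by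
    intro n
    obtain ⟨e, he⟩ := hνmem n
    rw [he]
    rw [Finsupp.prod]
    have h := Finset.prod_le_prod (f := fun _ : ℕ => (1:ℝ)) (g := fun a => q a ^ e a)
      (s := e.support) (fun i _ => zero_le_one)
      (fun i _ => one_le_pow₀ (le_of_lt (lt_of_lt_of_le hq0 (hmono.monotone (Nat.zero_le i)))))
    simpa using h
  have hνpos : ∀ n, (0:ℝ) < ν n := fun n => lt_of_lt_of_le one_pos (hν1 n)
  set S : Set ℝ := {σ : ℝ | Summable fun n => ν n ^ (-σ)} with hS
  have Sne : S.Nonempty := hσc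
  -- every element of S is positive
  have hmem_pos : ∀ σ ∈ S, 0 < σ := by
    intro σ hσ
    by_contra h
    push_neg at h
    have h1 : ∀ n, (1:ℝ) ≤ ν n ^ (-σ) :=
      fun n => Real.one_le_rpow (hν1 n) (by linarith)
    have h2 := (hσ : Summable fun n => ν n ^ (-σ)).tendsto_atTop_zero
    have h3 := h2.eventually (eventually_lt_nhds (show (0:ℝ) < 1 by norm_num))
    obtain ⟨n, hn⟩ := h3.exists
    exact absurd (h1 n) (not_le.2 hn)
  -- S is upward closed
  have hup : ∀ σ ∈ S, ∀ τ, σ ≤ τ → τ ∈ S := by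
    intro σ hσ τ hστ
    refine Summable.of_nonneg_of_le (fun n => (Real.rpow_pos_of_pos (hνpos n) _).le)
      (fun n => Real.rpow_le_rpow_of_exponent_le (hν1 n) (by linarith)) hσ
  have hσc0 : 0 ≤ sigmaC ν := le_csInf Sne fun σ hσ => (hmem_pos σ hσ).le
  -- counting: the set of Beurling integers up to T is finite
  have hfin : ∀ T : ℝ, {m : ℕ | ν m ≤ T}.Finite := by
    intro T
    obtain ⟨M, hM⟩ := eventually_atTop.1 (hνtend.eventually_gt_atTop T)
    refine (Set.finite_Iio M).subset fun m hm => ?_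
    by_contra h
    exact absurd (hM m (not_lt.1 h)) (not_lt.2 hm)
  -- counting bound: N(T) ≤ C T^σ
  have hcount : ∀ σ ∈ S, ∀ T : ℝ, 1 ≤ T →
      ((hfin T).toFinset.card : ℝ) ≤ (∑' n, ν n ^ (-σ)) * T ^ σ := by
    intro σ hσ T hT
    have hσ' : Summable fun n => ν n ^ (-σ) := hσ
    have hσpos := hmem_pos σ hσ
    have hTpos : (0:ℝ) < T := lt_of_lt_of_le one_pos hT
    have key : ((hfin T).toFinset.card : ℝ) * T ^ (-σ) ≤ ∑' n, ν n ^ (-σ) := by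
      calc ((hfin T).toFinset.card : ℝ) * T ^ (-σ)
          = ∑ _m ∈ (hfin T).toFinset, T ^ (-σ) := by
            rw [Finset.sum_const, nsmul_eq_mul]
        _ ≤ ∑ m ∈ (hfin T).toFinset, ν m ^ (-σ) := by
            refine Finset.sum_le_sum fun m hm => ?_
            have hmT : ν m ≤ T := by simpa using hm
            exact Real.rpow_le_rpow_of_nonpos (hνpos m) hmT (by linarith)
        _ ≤ ∑' n, ν n ^ (-σ) := by
            exact Summable.sum_le_tsum _ (fun n _ => (Real.rpow_pos_of_pos (hνpos n) _).le) hσ'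
    have hTne : T ^ (-σ) * T ^ σ = 1 := by
      rw [← Real.rpow_add hTpos]; simp
    calc ((hfin T).toFinset.card : ℝ)
        = ((hfin T).toFinset.card : ℝ) * T ^ (-σ) * T ^ σ := by
          rw [mul_assoc, hTne, mul_one]
      _ ≤ (∑' n, ν n ^ (-σ)) * T ^ σ :=
          mul_le_mul_of_nonneg_right key (Real.rpow_nonneg hTpos.le σ)
  -- main step: for fixed r > 2 σ_c and fixed N, Borel–Cantelli
  have hA : ∀ r : ℝ, 2 * sigmaC ν < r → ∀ N : ℕ,
      ∀ᵐ x : ℝ ∂volume, {p : ℕ × ℕ |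
        x ∈ Icc (-(N:ℝ)) N ∩ {y | |y - ν p.1 / ν p.2| < ν p.2 ^ (-r)}}.Finite := by
    intro r hr N
    have h2 : sInf S < r / 2 := by
      have : sigmaC ν < r / 2 := by linarith
      exact this
    obtain ⟨σ, hσS, hσlt⟩ := exists_lt_of_csInf_lt Sne h2
    have hσpos := hmem_pos σ hσS
    have hσc' : sigmaC ν ≤ σ := csInf_le ⟨0, fun τ hτ => (hmem_pos τ hτ).le⟩ hσS
    have hrσ : Summable (fun n => ν n ^ (-(r - σ))) := hup σ hσS (r - σ) (by linarith)
    have hr0 : 0 ≤ r := by linarith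
    set C := ∑' n, ν n ^ (-σ) with hC
    have hC0 : 0 ≤ C := tsum_nonneg fun n => (Real.rpow_pos_of_pos (hνpos n) _).le
    set s : ℕ × ℕ → Set ℝ := fun p =>
      Icc (-(N:ℝ)) N ∩ {y | |y - ν p.1 / ν p.2| < ν p.2 ^ (-r)} with hs
    refine ae_finite_setOf_mem (s := s) ?_
    set g : ℕ × ℕ → ENNReal := fun p =>
      if ν p.1 ≤ ν p.2 * ((N:ℝ) + 1) then ENNReal.ofReal (2 * ν p.2 ^ (-r)) else 0 with hg
    have hbound : ∀ p, volume (s p) ≤ g p := by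
      rintro ⟨m, n⟩
      by_cases hcase : ν m ≤ ν n * ((N:ℝ) + 1)
      · have hball : {y : ℝ | |y - ν m / ν n| < ν n ^ (-r)} =
            Metric.ball (ν m / ν n) (ν n ^ (-r)) := by
          ext y; simp [Metric.mem_ball, Real.dist_eq]
        calc volume (s (m, n)) ≤ volume {y : ℝ | |y - ν m / ν n| < ν n ^ (-r)} :=
              measure_mono Set.inter_subset_right
          _ = ENNReal.ofReal (2 * ν n ^ (-r)) := by rw [hball, Real.volume_ball]
          _ ≤ g (m, n) := by simp [hg, hcase]
      · have hempty : s (m, n) = ∅ := by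
          rw [Set.eq_empty_iff_forall_notMem]
          rintro x ⟨hx1, hx2⟩
          have hxN : x ≤ (N:ℝ) := hx1.2
          have hε : ν n ^ (-r) ≤ 1 :=
            Real.rpow_le_one_of_one_le_of_nonpos (hν1 n) (by linarith)
          have hc : ((N:ℝ) + 1) < ν m / ν n := by
            rw [lt_div_iff₀ (hνpos n)]
            nlinarith [not_le.1 hcase]
          have habs : |x - ν m / ν n| < 1 := lt_of_lt_of_le hx2 hε
          have : ν m / ν n - x < 1 := by
            have := abs_lt.1 habs
            linarith [this.1]
          linarith
        simp [hempty]
    have hsum : ∑' p : ℕ × ℕ, g p ≠ ⊤ := by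
      have hswap : ∑' p : ℕ × ℕ, g p = ∑' n : ℕ, ∑' m : ℕ, g (m, n) := by
        rw [ENNReal.tsum_prod']; exact ENNReal.tsum_comm
      set D := 2 * C * ((N:ℝ) + 1) ^ σ with hD
      have hN0 : (0:ℝ) ≤ (N:ℝ) + 1 := by positivity
      have hD0 : 0 ≤ D := mul_nonneg (mul_nonneg two_pos.le hC0) (Real.rpow_nonneg hN0 σ)
      have hN1 : (1:ℝ) ≤ (N:ℝ) + 1 := by
        have : (0:ℝ) ≤ (N:ℝ) := Nat.cast_nonneg N
        linarith
      have hinner : ∀ n : ℕ, ∑' m : ℕ, g (m, n) ≤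
          ENNReal.ofReal (D * ν n ^ (-(r - σ))) := by
        intro n
        set T := ν n * ((N:ℝ) + 1) with hT
        have hT1 : (1:ℝ) ≤ T := by
          calc (1:ℝ) = 1 * 1 := (mul_one 1).symm
            _ ≤ ν n * ((N:ℝ) + 1) := mul_le_mul (hν1 n) hN1 one_pos.le (hνpos n).le
        have heq : ∑' m : ℕ, g (m, n) =
            ∑ m ∈ (hfin T).toFinset, g (m, n) := by
          refine tsum_eq_sum fun m hm => ?_
          have : ¬ ν m ≤ T := by simpa using hm
          simp [hg, show ¬ ν m ≤ ν n * ((N:ℝ) + 1) from this]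
        have heq2 : ∑ m ∈ (hfin T).toFinset, g (m, n) =
            ((hfin T).toFinset.card : ENNReal) * ENNReal.ofReal (2 * ν n ^ (-r)) := by
          rw [Finset.sum_congr rfl (fun m hm => ?_), Finset.sum_const, nsmul_eq_mul]
          have : ν m ≤ T := by simpa using hm
          simp [hg, show ν m ≤ ν n * ((N:ℝ) + 1) from this]
        have hcard : ((hfin T).toFinset.card : ℝ) ≤ C * T ^ σ := hcount σ hσS T hT1
        rw [heq, heq2]
        have h1 : ((hfin T).toFinset.card : ENNReal) = ENNReal.ofReal ((hfin T).toFinset.card : ℝ) := by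
          simp
        rw [h1, ← ENNReal.ofReal_mul (by positivity)]
        refine ENNReal.ofReal_le_ofReal ?_
        have hmulexp : ν n ^ σ * ν n ^ (-r) = ν n ^ (-(r - σ)) := by
          rw [← Real.rpow_add (hνpos n)]; ring_nf
        have hval : C * T ^ σ * (2 * ν n ^ (-r)) = D * ν n ^ (-(r - σ)) := by
          rw [hT, Real.mul_rpow (hνpos n).le hN0, hD, ← hmulexp]; ring
        calc ((hfin T).toFinset.card : ℝ) * (2 * ν n ^ (-r))
            ≤ C * T ^ σ * (2 * ν n ^ (-r)) := by
              exact mul_le_mul_of_nonneg_right hcard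
                (mul_nonneg two_pos.le (Real.rpow_nonneg (hνpos n).le _))
          _ = D * ν n ^ (-(r - σ)) := hval
      have hfinal : ∑' n : ℕ, ENNReal.ofReal (D * ν n ^ (-(r - σ))) ≠ ⊤ := by
        rw [← ENNReal.ofReal_tsum_of_nonneg
          (fun n => mul_nonneg hD0 (Real.rpow_nonneg (hνpos n).le _)) (hrσ.mul_left D)]
        exact ENNReal.ofReal_ne_top
      rw [hswap]
      exact ne_top_of_le_ne_top hfinal (ENNReal.tsum_le_tsum hinner)
    exact ne_top_of_le_ne_top hsum (ENNReal.tsum_le_tsum hbound)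
  -- combine over a countable family of exponents and windows
  have hAll : ∀ᵐ x : ℝ ∂volume, ∀ k : ℕ, ∀ N : ℕ, {p : ℕ × ℕ |
      x ∈ Icc (-(N:ℝ)) N ∩
        {y | |y - ν p.1 / ν p.2| < ν p.2 ^ (-(2 * sigmaC ν + 1 / ((k:ℝ) + 1)))}}.Finite := by
    rw [ae_all_iff]
    intro k
    rw [ae_all_iff]
    intro N
    refine hA _ ?_ N
    have : (0:ℝ) < 1 / ((k:ℝ) + 1) := by positivity
    linarith
  filter_upwards [hAll] with x hx r hr
  obtain ⟨k, hk⟩ := exists_nat_one_div_lt (show (0:ℝ) < r - 2 * sigmaC ν by linarith)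
  obtain ⟨N, hN⟩ := exists_nat_ge |x|
  refine (hx k N).subset ?_
  intro p hp
  have hp' : |x - ν p.1 / ν p.2| < ν p.2 ^ (-r) := hp
  have hr' : 2 * sigmaC ν + 1 / ((k:ℝ) + 1) ≤ r := by linarith
  have hxN := abs_le.1 hN
  refine Set.mem_setOf_eq ▸ ⟨⟨hxN.1, hxN.2⟩, ?_⟩
  show |x - ν p.1 / ν p.2| < ν p.2 ^ (-(2 * sigmaC ν + 1 / ((k:ℝ) + 1)))
  exact lt_of_lt_of_le hp'
    (Real.rpow_le_rpow_of_exponent_le (hν1 p.2) (by linarith))
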